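/- arXiv:2409.17218 — 2 statements merged into one kernel-verified Lean document; each statement's English description precedes it below -/
import Mathlib

section
/- For all permutations g,g',g₀∈S_N one has #(g)−#(P(g)∨P(g'))≥#(q_{g₀}(g))−#(q_{g₀}(g)∨q_{g₀}(g')). Consequently the Cayley distance dominates the partition distance of the cycle partitions, which dominates the partition distance of the coarse grainings: d(g,g')≥d(P(g),P(g'))≥d(q_{g₀}(g),q_{g₀}(g')). -/
open scoped Classical

noncomputable section

namespace RTN

/-! ## Set partitions -/

/-- Number of blocks of a set partition (as an integer). -/
def nb {α : Type*} (p : Setoid α) : ℤ := Nat.card (Quotient p)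

/-- The partition distance `d(p,q) = #(p) + #(q) - 2 #(p ⊔ q)`. -/
def pdist {α : Type*} (p q : Setoid α) : ℤ := nb p + nb q - 2 * nb (p ⊔ q)

lemma pdist_comm {α : Type*} (p q : Setoid α) : pdist p q = pdist q p := by
  unfold pdist
  rw [sup_comm p q]
  ring

/-- `k` is a singlet (block of size one) of the partition `p`. -/
def IsSinglet {α : Type*} (p : Setoid α) (k : α) : Prop := ∀ y, p.r k y → y = k

/-- The number of singlets `#₁(p)` of a partition. -/
def nS {α : Type*} (p : Setoid α) : ℤ := Nat.card {k : α // IsSinglet p k}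

/-- The singlet distance `d₁(s₁,s₂) = #₁(s₁) + #₁(s₂) - 2 #₁(s₁ ⊔ s₂)`. -/
def sdist {α : Type*} (s₁ s₂ : Setoid α) : ℤ := nS s₁ + nS s₂ - 2 * nS (s₁ ⊔ s₂)

/-- The singlet pattern `s(p)`: the coarsest partition whose singlets are exactly
those of `p` (all non-singlet elements lie in one block). -/
def spat {α : Type*} (p : Setoid α) : Setoid α where
  r x y := x = y ∨ (¬ IsSinglet p x ∧ ¬ IsSinglet p y)
  iseqv := by
    refine ⟨fun x => Or.inl rfl, ?_, ?_⟩
    · intro x y h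
      rcases h with rfl | ⟨hx, hy⟩
      · exact Or.inl rfl
      · exact Or.inr ⟨hy, hx⟩
    · intro x y z h1 h2
      rcases h1 with rfl | ⟨hx, hy⟩
      · exact h2
      · rcases h2 with rfl | ⟨_, hz⟩
        · exact Or.inr ⟨hx, hy⟩
        · exact Or.inr ⟨hx, hz⟩

/-- The bit `b^k(p)`: `0` if `p` has a singlet at `k`, else `1`. -/
def bbit {α : Type*} (p : Setoid α) (k : α) : ℤ := if IsSinglet p k then 0 else 1

/-- The size of the block of `p` containing `x`. -/
def blockSize {α : Type*} (p : Setoid α) (x : α) : ℕ := Nat.card {y : α // p.r x y}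

noncomputable instance {α : Type*} [Finite α] (s : Setoid α) : Fintype (Quotient s) :=
  Fintype.ofFinite _

/-! ## Permutations -/

/-- The partition of `α` into orbits (cycles) of a permutation. -/
def orbitSetoid {α : Type*} (g : Equiv.Perm α) : Setoid α where
  r x y := ∃ k : ℤ, (g ^ k) x = y
  iseqv := by
    refine ⟨fun x => ⟨0, by simp⟩, ?_, ?_⟩
    · rintro x y ⟨k, rfl⟩
      exact ⟨-k, by simp [← Equiv.Perm.mul_apply, ← zpow_add]⟩
    · rintro x y z ⟨k, rfl⟩ ⟨l, rfl⟩
      exact ⟨l + k, by rw [zpow_add, Equiv.Perm.mul_apply]⟩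

/-- The number of cycles `#(g)` of a permutation (fixed points included). -/
def ncyc {α : Type*} (g : Equiv.Perm α) : ℤ := nb (orbitSetoid g)

/-- The Cayley distance `d(g,h) = N - #(g h⁻¹)`. -/
def cayley {α : Type*} [Fintype α] (g h : Equiv.Perm α) : ℤ :=
  (Fintype.card α : ℤ) - ncyc (g * h⁻¹)

lemma orbitSetoid_inv {α : Type*} (g : Equiv.Perm α) : orbitSetoid g⁻¹ = orbitSetoid g := by
  apply Setoid.ext
  intro x y
  constructor
  · rintro ⟨k, hk⟩
    exact ⟨-k, by rw [← inv_zpow']; exact hk⟩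
  · rintro ⟨k, hk⟩
    exact ⟨-k, by rw [inv_zpow', neg_neg]; exact hk⟩

lemma cayley_comm {α : Type*} [Fintype α] (g h : Equiv.Perm α) : cayley g h = cayley h g := by
  unfold cayley ncyc
  rw [show h * g⁻¹ = (g * h⁻¹)⁻¹ by rw [mul_inv_rev, inv_inv], orbitSetoid_inv]

/-- Coarse graining of a partition `p` by the blocks of `P(g₀)`: the partition of the set
of blocks of `P(g₀)` induced by `p ⊔ P(g₀)`. -/
def coarse {α : Type*} (g₀ : Equiv.Perm α) (p : Setoid α) :
    Setoid (Quotient (orbitSetoid g₀)) where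
  r u v := ∃ x y : α, Quotient.mk (orbitSetoid g₀) x = u ∧ Quotient.mk (orbitSetoid g₀) y = v ∧
    (p ⊔ orbitSetoid g₀).r x y
  iseqv := by
    refine ⟨?_, ?_, ?_⟩
    · intro u
      obtain ⟨x, rfl⟩ := Quotient.exists_rep u
      exact ⟨x, x, rfl, rfl, (p ⊔ orbitSetoid g₀).iseqv.refl x⟩
    · rintro u v ⟨x, y, hx, hy, hxy⟩
      exact ⟨y, x, hy, hx, (p ⊔ orbitSetoid g₀).iseqv.symm hxy⟩
    · rintro u v w ⟨x, y, hx, hy, hxy⟩ ⟨y', z, hy', hz, hyz⟩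
      refine ⟨x, z, hx, hz, ?_⟩
      have h1 : (orbitSetoid g₀).r y y' := Quotient.exact (hy.trans hy'.symm)
      have h2 : (p ⊔ orbitSetoid g₀).r y y' :=
        (le_sup_right : orbitSetoid g₀ ≤ p ⊔ orbitSetoid g₀) h1
      exact (p ⊔ orbitSetoid g₀).iseqv.trans hxy
        ((p ⊔ orbitSetoid g₀).iseqv.trans h2 hyz)

/-- The coarse graining `q_{g₀}(g) ∈ P_{#(g₀)}` of a permutation `g`. -/
def qc {α : Type*} (g₀ g : Equiv.Perm α) : Setoid (Quotient (orbitSetoid g₀)) :=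
  coarse g₀ (orbitSetoid g)

/-! ## Standard reflected-entropy boundary elements -/

/-- `g_B`, the product of `n` disjoint `m`-cycles `(k,ℓ) ↦ (k,ℓ+1)`. -/
def gB (n m : ℕ) : Equiv.Perm (Fin n × Fin m) :=
  Equiv.prodCongr (Equiv.refl (Fin n)) (finRotate m)

/-- `γ`, cyclically shifting `k ↦ k+1` on the elements with `ℓ` in the lower half,
fixing the rest. -/
def gamma (n m : ℕ) : Equiv.Perm (Fin n × Fin m) where
  toFun x := if m / 2 ≤ (x.2 : ℕ) then (finRotate n x.1, x.2) else x
  invFun x := if m / 2 ≤ (x.2 : ℕ) then ((finRotate n).symm x.1, x.2) else x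
  left_inv := by
    intro x
    by_cases h : m / 2 ≤ (x.2 : ℕ) <;> simp [h, -finRotate_apply, -finRotate_symm_apply]
  right_inv := by
    intro x
    by_cases h : m / 2 ≤ (x.2 : ℕ) <;> simp [h, -finRotate_apply, -finRotate_symm_apply]

/-- `g_A = γ⁻¹ g_B γ`. -/
def gA (n m : ℕ) : Equiv.Perm (Fin n × Fin m) :=
  (gamma n m)⁻¹ * gB n m * gamma n m

/-- For even `m`, `Fin m` splits into an upper and a lower half. -/
def halfEquiv (m : ℕ) (hm : m % 2 = 0) : Fin 2 × Fin (m / 2) ≃ Fin m :=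
  finProdFinEquiv.trans (finCongr (by omega))

/-- `X`, the product of the `2n` disjoint `(m/2)`-cycles cyclically permuting the
upper and the lower half of each block `k`. -/
def Xel (n m : ℕ) (hm : m % 2 = 0) : Equiv.Perm (Fin n × Fin m) :=
  Equiv.prodCongr (Equiv.refl (Fin n))
    ((halfEquiv m hm).permCongr
      (Equiv.prodCongr (Equiv.refl (Fin 2)) (finRotate (m / 2))))

/-- The set of blocks of `P(X)`; it has `2n` elements. -/
abbrev BX (n m : ℕ) (hm : m % 2 = 0) := Quotient (orbitSetoid (Xel n m hm))

/-- `q_A = q_X(g_A) ∈ P_{2n}`. -/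
def qAel (n m : ℕ) (hm : m % 2 = 0) : Setoid (BX n m hm) :=
  qc (Xel n m hm) (gA n m)

/-- `q_B = q_X(g_B) ∈ P_{2n}`. -/
def qBel (n m : ℕ) (hm : m % 2 = 0) : Setoid (BX n m hm) :=
  qc (Xel n m hm) (gB n m)

/-! ## Doubled elements (two copies) -/

/-- Two copies of the index set `{1,…,mn}`. -/
abbrev DIdx (n m : ℕ) := (Fin n × Fin m) ⊕ (Fin n × Fin m)

/-- `g̃_A = g_A ⊕ g_A`. -/
def gAt (n m : ℕ) : Equiv.Perm (DIdx n m) := Equiv.sumCongr (gA n m) (gA n m)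

/-- `g̃_B = g_B ⊕ g_B`. -/
def gBt (n m : ℕ) : Equiv.Perm (DIdx n m) := Equiv.sumCongr (gB n m) (gB n m)

/-- `X̃ = X ⊕ X`. -/
def Xt (n m : ℕ) (hm : m % 2 = 0) : Equiv.Perm (DIdx n m) :=
  Equiv.sumCongr (Xel n m hm) (Xel n m hm)

/-- The set of blocks of `P(X̃)`; it has `4n` elements. -/
abbrev BXt (n m : ℕ) (hm : m % 2 = 0) := Quotient (orbitSetoid (Xt n m hm))

/-- `q̃_A = q_{X̃}(g̃_A) ∈ P_{4n}`. -/
def qAt (n m : ℕ) (hm : m % 2 = 0) : Setoid (BXt n m hm) :=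
  qc (Xt n m hm) (gAt n m)

/-- `q̃_B = q_{X̃}(g̃_B) ∈ P_{4n}`. -/
def qBt (n m : ℕ) (hm : m % 2 = 0) : Setoid (BXt n m hm) :=
  qc (Xt n m hm) (gBt n m)

/-- A block of `P(X̃)` lies in the first copy. -/
def inCopy1 {n m : ℕ} {hm : m % 2 = 0} (u : BXt n m hm) : Prop :=
  ∃ x, Quotient.mk (orbitSetoid (Xt n m hm)) (Sum.inl x) = u

/-- `#₁⁽¹⁾(q)`: the number of singlets of `q` among the first-copy positions. -/
def nS1 {n m : ℕ} {hm : m % 2 = 0} (q : Setoid (BXt n m hm)) : ℤ :=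
  Nat.card {u : BXt n m hm // IsSinglet q u ∧ inCopy1 u}

/-- `#₁⁽²⁾(q)`: the number of singlets of `q` among the second-copy positions. -/
def nS2 {n m : ℕ} {hm : m % 2 = 0} (q : Setoid (BXt n m hm)) : ℤ :=
  Nat.card {u : BXt n m hm // IsSinglet q u ∧ ¬ inCopy1 u}

/-- `τ ∈ P_{4n}`, the two-block partition separating the two copies. -/
def tau (n m : ℕ) (hm : m % 2 = 0) : Setoid (BXt n m hm) where
  r u v := inCopy1 u ↔ inCopy1 v
  iseqv := ⟨fun _ => Iff.rfl, Iff.symm, Iff.trans⟩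

/-! ## Graphs, cuts and optimization programs -/

variable {V : Type*}

/-- Sum of an edge function along (the edge list of) a walk, with multiplicity. -/
def wkSum {β : Type*} [AddCommMonoid β] {G : SimpleGraph V} {x y : V}
    (f : Sym2 V → β) (L : G.Walk x y) : β :=
  (L.edges.map f).sum

variable [Fintype V]

/-- Sum of an edge weight function over a set of edges. -/
def wsum (f : Sym2 V → ℝ) (S : Set (Sym2 V)) : ℝ :=
  ∑ e ∈ Finset.univ.filter (· ∈ S), f e

/-- The cut surface `μ(r)`: edges of `G` with one endpoint in `r`, the other outside. -/
def mu (G : SimpleGraph V) (r : Set V) : Set (Sym2 V) :=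
  {e | e ∈ G.edgeSet ∧ ∃ x y, e = s(x, y) ∧ x ∈ r ∧ y ∉ r}

/-- `μ(r₁:r₂)`: edges of `G` with an endpoint in `r₁` and an endpoint in `r₂`. -/
def mu2 (G : SimpleGraph V) (r₁ r₂ : Set V) : Set (Sym2 V) :=
  {e | e ∈ G.edgeSet ∧ ∃ x y, e = s(x, y) ∧ x ∈ r₁ ∧ y ∈ r₂}

/-- `r` is a cut for `X : Y`. -/
def IsCut (X Y r : Set V) : Prop := X ⊆ r ∧ Y ⊆ rᶜ

/-- The minimal cut area `𝒜(X:Y)`. -/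
def minCut (G : SimpleGraph V) (w : Sym2 V → ℝ) (X Y : Set V) : ℝ :=
  sInf {a | ∃ r : Set V, IsCut X Y r ∧ a = wsum w (mu G r)}

/-- `(α,β,γ)` is a triway cut for `(A,B,C)`. -/
def IsTriway (A B C α β γ : Set V) : Prop :=
  α ∪ β ∪ γ = Set.univ ∧ Disjoint α β ∧ Disjoint β γ ∧ Disjoint α γ ∧
    A ⊆ α ∧ B ⊆ β ∧ C ⊆ γ

/-- The area of a triway cut with tensions `(t_{A:B}, t_{B:C}, t_{C:A})`. -/
def triArea (G : SimpleGraph V) (w : Sym2 V → ℝ) (tAB tBC tCA : ℝ)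
    (α β γ : Set V) : ℝ :=
  tAB * wsum w (mu2 G α β) + tBC * wsum w (mu2 G β γ) + tCA * wsum w (mu2 G γ α)

/-- The minimal triway cut area `𝒜_t(A:B:C)`. -/
def triCut (G : SimpleGraph V) (w : Sym2 V → ℝ) (tAB tBC tCA : ℝ)
    (A B C : Set V) : ℝ :=
  sInf {a | ∃ α β γ : Set V, IsTriway A B C α β γ ∧ a = triArea G w tAB tBC tCA α β γ}

/-- Boundary data: `∂ = A ⊔ B ⊔ C` (pairwise disjoint). -/
def Bdy (A B C : Set V) : Prop := Disjoint A B ∧ Disjoint A C ∧ Disjoint B C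

/-! ### The permutation optimization `R` -/

/-- The symmetric edge function induced by the Cayley distance of a vertex
configuration of permutations. -/
def permE {ι : Type*} [Fintype ι] (g : V → Equiv.Perm ι) : Sym2 V → ℝ :=
  Sym2.lift ⟨fun x y => (cayley (g x) (g y) : ℝ),
    fun x y => congrArg Int.cast (cayley_comm (g x) (g y))⟩

/-- The free energy `R(g) = Σ_e w(e) d(g(x),g(y))`. -/
def Renergy {ι : Type*} [Fintype ι] (G : SimpleGraph V) (w : Sym2 V → ℝ)
    (g : V → Equiv.Perm ι) : ℝ :=
  wsum (fun e => w e * permE g e) G.edgeSet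

/-- The optimal value `R` of the permutation optimization. -/
def Rval {ι : Type*} [Fintype ι] (G : SimpleGraph V) (w : Sym2 V → ℝ)
    (A B C : Set V) (g₁ g₂ : Equiv.Perm ι) : ℝ :=
  sInf {a | ∃ g : V → Equiv.Perm ι,
    (∀ v ∈ A, g v = g₁) ∧ (∀ v ∈ B, g v = g₂) ∧ (∀ v ∈ C, g v = 1) ∧
    a = Renergy G w g}

/-! ### The set-partition optimization `Q` -/

/-- The symmetric integer edge function induced by the partition distance of a vertex
configuration of partitions. -/
def partEZ {κ : Type*} (q : V → Setoid κ) : Sym2 V → ℤ :=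
  Sym2.lift ⟨fun x y => pdist (q x) (q y), fun x y => pdist_comm (q x) (q y)⟩

/-- The free energy `Q(q) = Σ_e w(e) d(q(x),q(y))`. -/
def Qenergy {κ : Type*} (G : SimpleGraph V) (w : Sym2 V → ℝ)
    (q : V → Setoid κ) : ℝ :=
  wsum (fun e => w e * (partEZ q e : ℝ)) G.edgeSet

/-- The optimal value `Q` of the set-partition optimization. -/
def Qval {κ : Type*} (G : SimpleGraph V) (w : Sym2 V → ℝ)
    (A B C : Set V) (q₁ q₂ : Setoid κ) : ℝ :=
  sInf {a | ∃ q : V → Setoid κ,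
    (∀ v ∈ A, q v = q₁) ∧ (∀ v ∈ B, q v = q₂) ∧ (∀ v ∈ C, q v = ⊥) ∧
    a = Qenergy G w q}

/-! ### The Boolean optimization `B` -/

/-- The Hamming distance between two bit strings. -/
def ham {κ : Type*} [Fintype κ] (b₁ b₂ : κ → Bool) : ℤ :=
  ∑ k : κ, if b₁ k = b₂ k then 0 else 1

/-- The bit string `b(q)` of a partition: `false` exactly at singlets. -/
def bvec {κ : Type*} (p : Setoid κ) : κ → Bool :=
  fun u => if IsSinglet p u then false else true

/-- Feasibility of `r` for the Boolean program at configuration `b`. -/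
def Bfeas {κ : Type*} [Fintype κ] (G : SimpleGraph V) (A B : Set V) (n : ℕ)
    (b : V → κ → Bool) (r : Sym2 V → ℕ) : Prop :=
  (∀ x ∈ A, ∀ y ∈ B, ∀ L : G.Walk x y,
    2 ∣ wkSum (fun e => (r e : ℤ)) L ∧
    wkSum (fun e => (r e : ℤ)) L ≥
      2 * ((n : ℤ) - if ∀ v ∈ L.support, ∀ k, b v k = true then 1 else 0)) ∧
  (∀ x y : V, G.Adj x y → (r s(x, y) : ℤ) ≥ ⌈(ham (b x) (b y) : ℚ) / 2⌉)

/-- The inner Boolean optimum `B(b)` at a fixed Boolean configuration `b`. -/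
def BvalAt {κ : Type*} [Fintype κ] (G : SimpleGraph V) (w : Sym2 V → ℝ)
    (A B : Set V) (n : ℕ) (b : V → κ → Bool) : ℝ :=
  sInf {a | ∃ r : Sym2 V → ℕ, Bfeas G A B n b r ∧
    a = wsum (fun e => w e * (r e : ℝ)) G.edgeSet}

/-- The optimal value `B` of the Boolean optimization. -/
def Bval (κ : Type*) [Fintype κ] (G : SimpleGraph V) (w : Sym2 V → ℝ)
    (A B C : Set V) (n : ℕ) : ℝ :=
  sInf {a | ∃ b : V → κ → Bool,
    (∀ v ∈ A ∪ B, ∀ k, b v k = true) ∧ (∀ v ∈ C, ∀ k, b v k = false) ∧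
    ∃ r : Sym2 V → ℕ, Bfeas G A B n b r ∧
      a = wsum (fun e => w e * (r e : ℝ)) G.edgeSet}

/-! ### The integer program `I` -/

/-- Feasibility of `(ρ,σ)` for the integer program. -/
def IPfeas (G : SimpleGraph V) (A B C : Set V) (n : ℕ) (ρ σ : Sym2 V → ℕ) : Prop :=
  (∀ x ∈ A, ∀ y ∈ B, ∀ L : G.Walk x y,
    2 ∣ wkSum (fun e => (σ e : ℤ) + (ρ e : ℤ)) L ∧
    wkSum (fun e => (σ e : ℤ) + (ρ e : ℤ)) L ≥
      2 * ((n : ℤ) - if wkSum (fun e => (ρ e : ℤ)) L = 0 then 1 else 0)) ∧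
  (∀ x ∈ A ∪ B, ∀ y ∈ C, ∀ L : G.Walk x y,
    wkSum (fun e => (ρ e : ℤ)) L ≥ (n : ℤ))

/-- The objective of the integer program. -/
def IPobj (G : SimpleGraph V) (w : Sym2 V → ℝ) (ρ σ : Sym2 V → ℕ) : ℝ :=
  wsum (fun e => w e * ((σ e : ℝ) + (ρ e : ℝ))) G.edgeSet

/-- The optimal value `I` of the integer program. -/
def Ival (G : SimpleGraph V) (w : Sym2 V → ℝ) (A B C : Set V) (n : ℕ) : ℝ :=
  sInf {a | ∃ ρ σ : Sym2 V → ℕ, IPfeas G A B C n ρ σ ∧ a = IPobj G w ρ σ}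

/-! ### The ℓ-intersecting cut problem `M` -/

/-- Feasibility for the `ℓ`-intersecting cut problem with boundary sets
`Γ₀, …, Γ_ℓ` and `C`, for a half-integer valued `ϱ`. -/
def Mfeas (G : SimpleGraph V) (Γ : ℕ → Set V) (ℓ : ℕ) (C : Set V)
    (ϱ : Sym2 V → ℚ) : Prop :=
  (∀ e, ∃ j : ℕ, ϱ e = (j : ℚ) / 2) ∧
  (∀ k k' : ℕ, k ≤ ℓ → k' ≤ ℓ → ∀ x ∈ Γ k, ∀ y ∈ Γ k', ∀ L : G.Walk x y,
    ∃ j : ℕ, wkSum ϱ L = |(k : ℚ) - (k' : ℚ)| + (j : ℚ)) ∧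
  (∀ k : ℕ, k ≤ ℓ → ∀ x ∈ Γ k, ∀ y ∈ C, ∀ L : G.Walk x y,
    ∃ j : ℕ, wkSum ϱ L = (ℓ : ℚ) / 2 + (j : ℚ))

/-- The objective of the `ℓ`-intersecting cut problem. -/
def Mobj (G : SimpleGraph V) (w : Sym2 V → ℝ) (ϱ : Sym2 V → ℚ) : ℝ :=
  wsum (fun e => w e * (ϱ e : ℝ)) G.edgeSet

/-- The optimal value `M` of the `ℓ`-intersecting cut problem. -/
def Mval (G : SimpleGraph V) (w : Sym2 V → ℝ) (Γ : ℕ → Set V) (ℓ : ℕ)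
    (C : Set V) : ℝ :=
  sInf {a | ∃ ϱ : Sym2 V → ℚ, Mfeas G Γ ℓ C ϱ ∧ a = Mobj G w ϱ}

/-- The complementary reduced graph `G^c`: the edges of `G` not lying entirely
inside `V'`. -/
def reducedGraph (G : SimpleGraph V) (V' : Set V) : SimpleGraph V where
  Adj x y := G.Adj x y ∧ ¬ (x ∈ V' ∧ y ∈ V')
  symm := by
    constructor
    intro x y h
    exact ⟨h.1.symm, fun hc => h.2 ⟨hc.2, hc.1⟩⟩
  loopless := by
    constructor
    intro x h
    exact G.loopless.irrefl x h.1

end RTN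


namespace RTNAux

open RTN

variable {α : Type*}

lemma le_apply {p q : Setoid α} (h : p ≤ q) {x y : α} (hxy : p x y) : q x y := h hxy

/-- The setoid identifying `a` and `b` (and nothing else). -/
def pairS (a b : α) : Setoid α where
  r u v := u = v ∨ (u = a ∧ v = b) ∨ (u = b ∧ v = a)
  iseqv := by
    refine ⟨fun x => Or.inl rfl, ?_, ?_⟩
    · rintro x y (rfl | ⟨rfl, rfl⟩ | ⟨rfl, rfl⟩)
      · exact Or.inl rfl
      · exact Or.inr (Or.inr ⟨rfl, rfl⟩)
      · exact Or.inr (Or.inl ⟨rfl, rfl⟩)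
    · intro x y z h1 h2
      rcases h1 with h1 | ⟨ha1, hb1⟩ | ⟨ha1, hb1⟩
      · rw [h1]; exact h2
      · rcases h2 with h2 | ⟨ha2, hb2⟩ | ⟨ha2, hb2⟩
        · exact Or.inr (Or.inl ⟨ha1, h2 ▸ hb1⟩)
        · exact Or.inr (Or.inl ⟨ha1, hb2⟩)
        · exact Or.inl (ha1.trans hb2.symm)
      · rcases h2 with h2 | ⟨ha2, hb2⟩ | ⟨ha2, hb2⟩
        · exact Or.inr (Or.inr ⟨ha1, h2 ▸ hb1⟩)
        · exact Or.inl (ha1.trans hb2.symm)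
        · exact Or.inr (Or.inr ⟨ha1, hb2⟩)

lemma pairS_rel_ab (a b : α) : pairS a b a b := Or.inr (Or.inl ⟨rfl, rfl⟩)

lemma pairS_le {p : Setoid α} {a b : α} (h : p a b) : pairS a b ≤ p := by
  rw [Setoid.le_def]
  rintro x y (rfl | ⟨rfl, rfl⟩ | ⟨rfl, rfl⟩)
  · exact p.refl x
  · exact h
  · exact p.symm h

lemma sup_pairS_iff (p : Setoid α) (a b u v : α) :
    (p ⊔ pairS a b) u v ↔ p u v ∨ (p u a ∧ p b v) ∨ (p u b ∧ p a v) := by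
  constructor
  · intro h
    rw [Setoid.sup_eq_eqvGen] at h
    have h' : Relation.EqvGen (fun x y => p x y ∨ pairS a b x y) u v := h
    clear h
    induction h' with
    | rel x y hxy =>
      rcases hxy with h | (rfl | ⟨rfl, rfl⟩ | ⟨rfl, rfl⟩)
      · exact Or.inl h
      · exact Or.inl (p.refl _)
      · exact Or.inr (Or.inl ⟨p.refl _, p.refl _⟩)
      · exact Or.inr (Or.inr ⟨p.refl _, p.refl _⟩)
    | refl x => exact Or.inl (p.refl _)
    | symm x y _ ih =>
      rcases ih with h | ⟨h1, h2⟩ | ⟨h1, h2⟩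
      · exact Or.inl (p.symm h)
      · exact Or.inr (Or.inr ⟨p.symm h2, p.symm h1⟩)
      · exact Or.inr (Or.inl ⟨p.symm h2, p.symm h1⟩)
    | trans x y z _ _ ih1 ih2 =>
      rcases ih1 with h | ⟨h1, h2⟩ | ⟨h1, h2⟩ <;>
        rcases ih2 with h' | ⟨h1', h2'⟩ | ⟨h1', h2'⟩
      · exact Or.inl (p.trans h h')
      · exact Or.inr (Or.inl ⟨p.trans h h1', h2'⟩)
      · exact Or.inr (Or.inr ⟨p.trans h h1', h2'⟩)
      · exact Or.inr (Or.inl ⟨h1, p.trans h2 h'⟩)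
      · exact Or.inl (p.trans h1 (p.trans (p.symm (p.trans h2 h1')) h2'))
      · exact Or.inl (p.trans h1 h2')
      · exact Or.inr (Or.inr ⟨h1, p.trans h2 h'⟩)
      · exact Or.inl (p.trans h1 h2')
      · exact Or.inl (p.trans h1 (p.trans (p.symm (p.trans h2 h1')) h2'))
  · have hp : p ≤ p ⊔ pairS a b := le_sup_left
    have hq : pairS a b ≤ p ⊔ pairS a b := le_sup_right
    rintro (h | ⟨h1, h2⟩ | ⟨h1, h2⟩)
    · exact le_apply hp h
    · exact (p ⊔ pairS a b).trans (le_apply hp h1)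
        ((p ⊔ pairS a b).trans (le_apply hq (pairS_rel_ab a b)) (le_apply hp h2))
    · exact (p ⊔ pairS a b).trans (le_apply hp h1)
        ((p ⊔ pairS a b).trans ((p ⊔ pairS a b).symm (le_apply hq (pairS_rel_ab a b)))
          (le_apply hp h2))

/-- The canonical surjection between quotients of comparable setoids. -/
noncomputable def qmap {p q : Setoid α} (h : p ≤ q) : Quotient p → Quotient q :=
  Quotient.lift (Quotient.mk q) (fun _ _ hxy => Quotient.sound (le_apply h hxy))

lemma qmap_surj {p q : Setoid α} (h : p ≤ q) : Function.Surjective (qmap h) := by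
  intro z
  obtain ⟨x, rfl⟩ := z.exists_rep
  exact ⟨Quotient.mk p x, rfl⟩

lemma nb_mono [Finite α] {p q : Setoid α} (h : p ≤ q) : nb q ≤ nb p := by
  unfold RTN.nb
  exact_mod_cast Nat.card_le_card_of_surjective (qmap h) (qmap_surj h)

lemma nb_le_card [Finite α] (p : Setoid α) : nb p ≤ (Nat.card α : ℤ) := by
  unfold RTN.nb
  exact_mod_cast Nat.card_le_card_of_surjective (Quotient.mk p) (fun z => z.exists_rep)

lemma nb_le_nb_sup_pair_add_one [Finite α] (p : Setoid α) (a b : α) :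
    nb p ≤ nb (p ⊔ pairS a b) + 1 := by
  set s := p ⊔ pairS a b with hs
  have wd : ∀ u v : α, p u v →
      (if p b u then (none : Option (Quotient s)) else some (Quotient.mk s u)) =
      (if p b v then none else some (Quotient.mk s v)) := by
    intro u v huv
    have hbv : p b u ↔ p b v := ⟨fun h => p.trans h huv, fun h => p.trans h (p.symm huv)⟩
    by_cases hb : p b u
    · rw [if_pos hb, if_pos (hbv.mp hb)]
    · rw [if_neg hb, if_neg (fun h => hb (hbv.mpr h))]
      exact congrArg some (Quotient.sound (le_apply (le_sup_left : p ≤ s) huv))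
  set f : Quotient p → Option (Quotient s) :=
    Quotient.lift (fun u => if p b u then (none : Option (Quotient s))
      else some (Quotient.mk s u)) wd with hf
  have hinj : Function.Injective f := by
    intro u v
    induction u using Quotient.ind
    induction v using Quotient.ind
    rename_i x y
    intro hxy
    have hx : f (Quotient.mk p x) = if p b x then none else some (Quotient.mk s x) := rfl
    have hy : f (Quotient.mk p y) = if p b y then none else some (Quotient.mk s y) := rfl
    rw [hx, hy] at hxy
    by_cases h1 : p b x <;> by_cases h2 : p b y
    · exact Quotient.sound (p.trans (p.symm h1) h2)
    · rw [if_pos h1, if_neg h2] at hxy; exact absurd hxy (by simp)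
    · rw [if_neg h1, if_pos h2] at hxy; exact absurd hxy (by simp)
    · rw [if_neg h1, if_neg h2] at hxy
      have : Quotient.mk s x = Quotient.mk s y := by simpa using hxy
      have hsxy : s x y := Quotient.exact this
      rcases (sup_pairS_iff p a b x y).mp hsxy with h | ⟨ha1, ha2⟩ | ⟨ha1, ha2⟩
      · exact Quotient.sound h
      · exact absurd ha2 h2
      · exact absurd (p.symm ha1) h1
  have hcard : Nat.card (Quotient p) ≤ Nat.card (Option (Quotient s)) :=
    Nat.card_le_card_of_injective f hinj
  rw [Finite.card_option] at hcard
  unfold RTN.nb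
  exact_mod_cast hcard

lemma nb_sup_pair_add_one_le [Finite α] {p : Setoid α} {a b : α} (hab : ¬ p a b) :
    nb (p ⊔ pairS a b) + 1 ≤ nb p := by
  set s := p ⊔ pairS a b with hs
  have hsurj := qmap_surj (le_sup_left : p ≤ s)
  have hle : Nat.card (Quotient s) ≤ Nat.card (Quotient p) :=
    Nat.card_le_card_of_surjective _ hsurj
  have hne : Nat.card (Quotient p) ≠ Nat.card (Quotient s) := by
    intro hc
    have hbij := (Nat.bijective_iff_surjective_and_card (qmap (le_sup_left : p ≤ s))).2
      ⟨hsurj, hc⟩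
    have h1 : qmap (le_sup_left : p ≤ s) (Quotient.mk p a) =
        qmap (le_sup_left : p ≤ s) (Quotient.mk p b) :=
      Quotient.sound (le_apply (le_sup_right : pairS a b ≤ s) (pairS_rel_ab a b))
    exact hab (Quotient.exact (hbij.1 h1))
  have : Nat.card (Quotient s) < Nat.card (Quotient p) := lt_of_le_of_ne hle (fun h => hne h.symm)
  unfold RTN.nb
  omega

lemma key0 [Finite α] {x y : Setoid α} (hxy : x ≤ y) (a b : α) :
    nb y + nb (x ⊔ pairS a b) ≤ nb x + nb (y ⊔ pairS a b) := by
  by_cases h : y a b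
  · have hy : y ⊔ pairS a b = y := sup_eq_left.mpr (pairS_le h)
    rw [hy]
    have := nb_mono (le_sup_left : x ≤ x ⊔ pairS a b)
    linarith
  · have hx : ¬ x a b := fun h' => h (le_apply hxy h')
    have h1 := nb_sup_pair_add_one_le hx
    have h2 := nb_le_nb_sup_pair_add_one y a b
    linarith

/-- The key submodularity-type inequality for block counts. -/
lemma key [Fintype α] (x y r : Setoid α) (hxy : x ≤ y) :
    nb y + nb (x ⊔ r) ≤ nb x + nb (y ⊔ r) := by
  classical
  have hrsup : r = (Finset.univ.filter (fun ab : α × α => r ab.1 ab.2)).sup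
      (fun ab => pairS ab.1 ab.2) := by
    apply le_antisymm
    · rw [Setoid.le_def]
      intro u v huv
      have hle : pairS u v ≤ (Finset.univ.filter (fun ab : α × α => r ab.1 ab.2)).sup
          (fun ab => pairS ab.1 ab.2) :=
        Finset.le_sup (f := fun ab : α × α => pairS ab.1 ab.2)
          (by simp [huv] : (u, v) ∈ Finset.univ.filter (fun ab : α × α => r ab.1 ab.2))
      exact le_apply hle (pairS_rel_ab u v)
    · apply Finset.sup_le
      intro ab hab
      exact pairS_le (by simpa using hab : r ab.1 ab.2)
  suffices H : ∀ (t : Finset (α × α)) (x y : Setoid α), x ≤ y →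
      nb y + nb (x ⊔ t.sup (fun ab => pairS ab.1 ab.2)) ≤
        nb x + nb (y ⊔ t.sup (fun ab => pairS ab.1 ab.2)) by
    rw [hrsup]
    exact H _ x y hxy
  intro t
  induction t using Finset.induction_on with
  | empty =>
    intro x y hxy
    simp only [Finset.sup_empty, sup_bot_eq]
    linarith
  | @insert c t hc ih =>
    intro x y hxy
    rw [Finset.sup_insert]
    have e : ∀ z : Setoid α, z ⊔ (pairS c.1 c.2 ⊔ t.sup (fun ab => pairS ab.1 ab.2)) =
        (z ⊔ t.sup (fun ab => pairS ab.1 ab.2)) ⊔ pairS c.1 c.2 := fun z => by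
      rw [sup_comm (pairS c.1 c.2) _, ← sup_assoc]
    rw [e x, e y]
    have h1 := ih x y hxy
    have h2 := key0 (sup_le_sup_right hxy (t.sup (fun ab => pairS ab.1 ab.2))) c.1 c.2
    linarith

/-! ### Coarse graining -/

lemma nb_coarse [Finite α] (g₀ : Equiv.Perm α) (p : Setoid α) :
    nb (RTN.coarse g₀ p) = nb (p ⊔ RTN.orbitSetoid g₀) := by
  set c := RTN.orbitSetoid g₀ with hc
  set s := p ⊔ c with hs
  set q := RTN.coarse g₀ p with hq
  have hwd1 : ∀ x y : α, c x y → Quotient.mk s x = Quotient.mk s y := fun x y h =>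
    Quotient.sound (le_apply (le_sup_right : c ≤ s) h)
  set inner : Quotient c → Quotient s := Quotient.lift (Quotient.mk s) hwd1 with hinner
  have hwd2 : ∀ u v : Quotient c, q u v → inner u = inner v := by
    rintro u v ⟨x, y, hx, hy, hxy⟩
    subst hx; subst hy
    exact Quotient.sound hxy
  set G : Quotient q → Quotient s := Quotient.lift inner hwd2 with hG
  have hGsurj : Function.Surjective G := by
    intro z
    obtain ⟨x, rfl⟩ := z.exists_rep
    exact ⟨Quotient.mk q (Quotient.mk c x), rfl⟩
  have hwd3 : ∀ x y : α, s x y →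
      Quotient.mk q (Quotient.mk c x) = Quotient.mk q (Quotient.mk c y) := fun x y h =>
    Quotient.sound ⟨x, y, rfl, rfl, h⟩
  set F : Quotient s → Quotient q :=
    Quotient.lift (fun x => Quotient.mk q (Quotient.mk c x)) hwd3 with hF
  have hFsurj : Function.Surjective F := by
    intro z
    obtain ⟨u, rfl⟩ := z.exists_rep
    obtain ⟨x, rfl⟩ := u.exists_rep
    exact ⟨Quotient.mk s x, rfl⟩
  have h1 : Nat.card (Quotient q) ≤ Nat.card (Quotient s) :=
    Nat.card_le_card_of_surjective F hFsurj
  have h2 : Nat.card (Quotient s) ≤ Nat.card (Quotient q) :=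
    Nat.card_le_card_of_surjective G hGsurj
  unfold RTN.nb
  exact_mod_cast le_antisymm h1 h2

lemma coarse_sup (g₀ : Equiv.Perm α) (p p' : Setoid α) :
    RTN.coarse g₀ p ⊔ RTN.coarse g₀ p' = RTN.coarse g₀ (p ⊔ p') := by
  set c := RTN.orbitSetoid g₀ with hc
  apply le_antisymm
  · apply sup_le
    · rw [Setoid.le_def]
      rintro u v ⟨x, y, hx, hy, hxy⟩
      exact ⟨x, y, hx, hy,
        le_apply (sup_le_sup_right (le_sup_left : p ≤ p ⊔ p') c) hxy⟩
    · rw [Setoid.le_def]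
      rintro u v ⟨x, y, hx, hy, hxy⟩
      exact ⟨x, y, hx, hy,
        le_apply (sup_le_sup_right (le_sup_right : p' ≤ p ⊔ p') c) hxy⟩
  · rw [Setoid.le_def]
    rintro u v ⟨x, y, hx, hy, hxy⟩
    subst hx; subst hy
    have hd : ((p ⊔ p') ⊔ c) = (p ⊔ c) ⊔ (p' ⊔ c) := sup_sup_distrib_right p p' c
    rw [hd, Setoid.sup_eq_eqvGen] at hxy
    have hxy' : Relation.EqvGen (fun x y => (p ⊔ c) x y ∨ (p' ⊔ c) x y) x y := hxy
    clear hxy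
    induction hxy' with
    | rel x y h =>
      rcases h with h | h
      · exact le_apply (le_sup_left : RTN.coarse g₀ p ≤ _) ⟨x, y, rfl, rfl, h⟩
      · exact le_apply (le_sup_right : RTN.coarse g₀ p' ≤ _) ⟨x, y, rfl, rfl, h⟩
    | refl x => exact (RTN.coarse g₀ p ⊔ RTN.coarse g₀ p').refl _
    | symm x y _ ih => exact (RTN.coarse g₀ p ⊔ RTN.coarse g₀ p').symm ih
    | trans x y z _ _ ih1 ih2 => exact (RTN.coarse g₀ p ⊔ RTN.coarse g₀ p').trans ih1 ih2

/-! ### Orbits and transpositions -/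

lemma orbit_rel_apply (g : Equiv.Perm α) (x : α) : RTN.orbitSetoid g x (g x) :=
  ⟨1, by simp⟩

lemma orbit_le {g : Equiv.Perm α} {s : Setoid α} (h : ∀ x, s x (g x)) :
    RTN.orbitSetoid g ≤ s := by
  have hn : ∀ (n : ℕ) (x : α), s x ((g ^ n) x) := by
    intro n
    induction n with
    | zero => intro x; simpa using s.refl x
    | succ n ih =>
      intro x
      have he : (g ^ (n + 1)) x = (g ^ n) (g x) := by
        rw [pow_succ, Equiv.Perm.mul_apply]
      rw [he]
      exact s.trans (h x) (ih (g x))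
  rw [Setoid.le_def]
  rintro x y ⟨k, rfl⟩
  obtain ⟨n, rfl | rfl⟩ := Int.eq_nat_or_neg k
  · rw [zpow_natCast]
    exact hn n x
  · have he : (g ^ n) ((g ^ (-(n:ℤ))) x) = x := by
      rw [← zpow_natCast g n, ← Equiv.Perm.mul_apply, ← zpow_add, add_neg_cancel,
        zpow_zero, Equiv.Perm.one_apply]
    have h0 := hn n ((g ^ (-(n:ℤ))) x)
    rw [he] at h0
    exact s.symm h0

lemma orbit_le_swap [DecidableEq α] (a b : α) (g : Equiv.Perm α) :
    RTN.orbitSetoid g ≤ RTN.orbitSetoid (Equiv.swap a b * g) ⊔ pairS a b := by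
  set s := RTN.orbitSetoid (Equiv.swap a b * g) ⊔ pairS a b with hs
  have horb : RTN.orbitSetoid (Equiv.swap a b * g) ≤ s := le_sup_left
  have hpair : pairS a b ≤ s := le_sup_right
  apply orbit_le
  intro x
  by_cases h1 : g x = a
  · have h2 : (Equiv.swap a b * g) x = b := by
      rw [Equiv.Perm.mul_apply, h1, Equiv.swap_apply_left]
    have h3 : s x b := h2 ▸ le_apply horb (orbit_rel_apply (Equiv.swap a b * g) x)
    rw [h1]
    exact s.trans h3 (le_apply hpair (Or.inr (Or.inr ⟨rfl, rfl⟩)))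
  · by_cases h2 : g x = b
    · have h3 : (Equiv.swap a b * g) x = a := by
        rw [Equiv.Perm.mul_apply, h2, Equiv.swap_apply_right]
      have h4 : s x a := h3 ▸ le_apply horb (orbit_rel_apply (Equiv.swap a b * g) x)
      rw [h2]
      exact s.trans h4 (le_apply hpair (pairS_rel_ab a b))
    · have h3 : (Equiv.swap a b * g) x = g x := by
        rw [Equiv.Perm.mul_apply, Equiv.swap_apply_of_ne_of_ne h1 h2]
      exact h3 ▸ le_apply horb (orbit_rel_apply (Equiv.swap a b * g) x)

lemma orbit_swap_le [DecidableEq α] (a b : α) (g : Equiv.Perm α) :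
    RTN.orbitSetoid (Equiv.swap a b * g) ≤ RTN.orbitSetoid g ⊔ pairS a b := by
  have h := orbit_le_swap a b (Equiv.swap a b * g)
  rwa [← mul_assoc, Equiv.swap_mul_self, one_mul] at h

lemma merge [Finite α] [DecidableEq α] {g : Equiv.Perm α} {a b : α} (_hab : a ≠ b)
    (h : ¬ RTN.orbitSetoid g a b) : RTN.orbitSetoid (Equiv.swap a b * g) b a := by
  have hP : ∃ m : ℕ, 0 < m ∧ (g ^ m) b = b := by
    refine ⟨orderOf g, orderOf_pos g, ?_⟩
    rw [pow_orderOf_eq_one, Equiv.Perm.one_apply]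
  classical
  set m := Nat.find hP with hm
  obtain ⟨hm1, hmb⟩ : 0 < m ∧ (g ^ m) b = b := Nat.find_spec hP
  have hmin : ∀ k, k < m → ¬ (0 < k ∧ (g ^ k) b = b) := fun k hk => Nat.find_min hP hk
  have horb : ∀ i : ℕ, RTN.orbitSetoid g b ((g ^ i) b) := fun i =>
    ⟨(i : ℤ), by rw [zpow_natCast]⟩
  have step : ∀ i, i < m → ((Equiv.swap a b * g) ^ i) b = (g ^ i) b := by
    intro i
    induction i with
    | zero => intro _; rfl
    | succ i ih =>
      intro hi
      have hii : i < m := Nat.lt_of_succ_lt hi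
      rw [pow_succ', Equiv.Perm.mul_apply, ih hii, Equiv.Perm.mul_apply,
        ← Equiv.Perm.mul_apply g (g ^ i), ← pow_succ']
      set cc := (g ^ (i + 1)) b with hcc
      have hcb : RTN.orbitSetoid g b cc := horb (i + 1)
      have hca : cc ≠ a := by
        intro hca
        exact h ((RTN.orbitSetoid g).symm (hca ▸ hcb))
      have hcb' : cc ≠ b := by
        intro hcb'
        exact hmin (i + 1) hi ⟨Nat.succ_pos i, hcb'⟩
      exact Equiv.swap_apply_of_ne_of_ne hca hcb'
  obtain ⟨j, hj⟩ : ∃ j, m = j + 1 := ⟨m - 1, (Nat.succ_pred_eq_of_pos hm1).symm⟩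
  have hfinal : ((Equiv.swap a b * g) ^ m) b = a := by
    rw [hj, pow_succ', Equiv.Perm.mul_apply, step j (by omega), Equiv.Perm.mul_apply,
      ← Equiv.Perm.mul_apply g (g ^ j), ← pow_succ', ← hj, hmb, Equiv.swap_apply_right]
  exact ⟨(m : ℤ), by rw [zpow_natCast]; exact hfinal⟩

lemma pdist_self [Finite α] (p : Setoid α) : RTN.pdist p p = 0 := by
  unfold RTN.pdist
  rw [sup_idem]
  ring

lemma pdist_swap [Finite α] [DecidableEq α] (g : Equiv.Perm α) (a b : α) :
    RTN.pdist (RTN.orbitSetoid (Equiv.swap a b * g)) (RTN.orbitSetoid g) ≤ 1 := by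
  by_cases hab : a = b
  · subst hab
    have ht : Equiv.swap a a * g = g := by
      rw [Equiv.swap_self]
      ext x
      simp
    rw [ht, pdist_self]
    norm_num
  set p := RTN.orbitSetoid g with hp
  set q := RTN.orbitSetoid (Equiv.swap a b * g) with hqdef
  have hq_le : q ≤ p ⊔ pairS a b := orbit_swap_le a b g
  have hp_le : p ≤ q ⊔ pairS a b := orbit_le_swap a b g
  by_cases hpa : p a b
  · have hpair_p : pairS a b ≤ p := pairS_le hpa
    have e1 : p ⊔ pairS a b = p := sup_eq_left.mpr hpair_p
    have hqp : q ≤ p := e1 ▸ hq_le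
    have e2 : q ⊔ pairS a b = p := by
      apply le_antisymm
      · exact sup_le hqp hpair_p
      · exact hp_le
    have e3 : q ⊔ p = p := sup_eq_right.mpr hqp
    have h1 : nb q ≤ nb (q ⊔ pairS a b) + 1 := nb_le_nb_sup_pair_add_one q a b
    rw [e2] at h1
    unfold RTN.pdist
    rw [e3]
    linarith
  · have hqa : q a b := (RTN.orbitSetoid _).symm (merge hab hpa)
    have hpair_q : pairS a b ≤ q := pairS_le hqa
    have e1 : q ⊔ pairS a b = q := sup_eq_left.mpr hpair_q
    have hpq : p ≤ q := e1 ▸ hp_le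
    have e2 : p ⊔ pairS a b = q := by
      apply le_antisymm
      · exact sup_le hpq hpair_q
      · exact hq_le
    have e3 : q ⊔ p = q := sup_eq_left.mpr hpq
    have h1 : nb p ≤ nb (p ⊔ pairS a b) + 1 := nb_le_nb_sup_pair_add_one p a b
    rw [e2] at h1
    unfold RTN.pdist
    rw [e3]
    linarith

lemma pdist_triangle [Fintype α] (p q r : Setoid α) :
    RTN.pdist p r ≤ RTN.pdist p q + RTN.pdist q r := by
  have h1 := key q (q ⊔ r) p (le_sup_left : q ≤ q ⊔ r)
  have h2 : nb ((q ⊔ r) ⊔ p) ≤ nb (p ⊔ r) := by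
    apply nb_mono
    exact sup_le (le_sup_right : p ≤ _) (le_trans (le_sup_right : r ≤ q ⊔ r) le_sup_left)
  have hcomm : q ⊔ p = p ⊔ q := sup_comm q p
  rw [hcomm] at h1
  unfold RTN.pdist
  linarith

lemma ncyc_one [Fintype α] : RTN.ncyc (1 : Equiv.Perm α) = (Fintype.card α : ℤ) := by
  have hwd : ∀ x y : α, RTN.orbitSetoid (1 : Equiv.Perm α) x y → x = y := by
    rintro x y ⟨k, hk⟩
    simpa using hk
  set F : Quotient (RTN.orbitSetoid (1 : Equiv.Perm α)) → α :=
    Quotient.lift id (fun x y h => hwd x y h) with hF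
  have hbij : Function.Bijective F := by
    constructor
    · intro u v
      induction u using Quotient.ind
      induction v using Quotient.ind
      rename_i x y
      intro h
      have : x = y := h
      rw [this]
    · intro x
      exact ⟨Quotient.mk _ x, rfl⟩
  unfold RTN.ncyc RTN.nb
  rw [Nat.card_congr (Equiv.ofBijective F hbij), Nat.card_eq_fintype_card]

lemma eq_one_of_ncyc_eq_card [Fintype α] {σ : Equiv.Perm α}
    (h : RTN.ncyc σ = (Fintype.card α : ℤ)) : σ = 1 := by
  have hsurj : Function.Surjective (Quotient.mk (RTN.orbitSetoid σ)) := fun z => z.exists_rep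
  have hcard : Nat.card α = Nat.card (Quotient (RTN.orbitSetoid σ)) := by
    have : (Nat.card (Quotient (RTN.orbitSetoid σ)) : ℤ) = (Fintype.card α : ℤ) := h
    have h2 : Nat.card (Quotient (RTN.orbitSetoid σ)) = Fintype.card α := by exact_mod_cast this
    rw [h2, Nat.card_eq_fintype_card]
  have hbij := (Nat.bijective_iff_surjective_and_card
    (Quotient.mk (RTN.orbitSetoid σ))).2 ⟨hsurj, hcard⟩
  ext x
  have : Quotient.mk (RTN.orbitSetoid σ) x = Quotient.mk (RTN.orbitSetoid σ) (σ x) :=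
    Quotient.sound (orbit_rel_apply σ x)
  have hx := hbij.1 this
  simp [← hx]

lemma ncyc_le_card [Fintype α] (σ : Equiv.Perm α) :
    RTN.ncyc σ ≤ (Fintype.card α : ℤ) := by
  have := nb_le_card (RTN.orbitSetoid σ)
  rwa [Nat.card_eq_fintype_card] at this

lemma Kmain [Fintype α] [DecidableEq α] :
    ∀ (n : ℕ) (σ g' : Equiv.Perm α), (Fintype.card α : ℤ) - RTN.ncyc σ ≤ n →
      RTN.pdist (RTN.orbitSetoid (σ * g')) (RTN.orbitSetoid g') ≤
        (Fintype.card α : ℤ) - RTN.ncyc σ := by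
  intro n
  induction n with
  | zero =>
    intro σ g' h
    have h1 := ncyc_le_card σ
    have h2 : RTN.ncyc σ = (Fintype.card α : ℤ) := by omega
    rw [eq_one_of_ncyc_eq_card h2, one_mul, pdist_self, ncyc_one]
    omega
  | succ n ih =>
    intro σ g' h
    by_cases h1 : σ = 1
    · subst h1
      rw [one_mul, pdist_self, ncyc_one]
      omega
    · obtain ⟨a, ha⟩ : ∃ x, σ x ≠ x := by
        by_contra hc
        push_neg at hc
        exact h1 (Equiv.ext hc)
      set t := Equiv.swap a (σ a) with ht
      set σ' := t * σ with hσ'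
      have hfix : σ' a = a := by
        rw [hσ', Equiv.Perm.mul_apply, ht, Equiv.swap_apply_right]
      have hne : ¬ RTN.orbitSetoid σ' a (σ a) := by
        rintro ⟨k, hk⟩
        rw [Equiv.Perm.zpow_apply_eq_self_of_apply_eq_self hfix k] at hk
        exact ha hk.symm
      have e1 : RTN.orbitSetoid σ' ⊔ pairS a (σ a) = RTN.orbitSetoid σ := by
        apply le_antisymm
        · apply sup_le
          · have h2 := orbit_swap_le a (σ a) σ
            have h3 : pairS a (σ a) ≤ RTN.orbitSetoid σ := pairS_le (orbit_rel_apply σ a)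
            rw [sup_eq_left.mpr h3] at h2
            exact h2
          · exact pairS_le (orbit_rel_apply σ a)
        · exact orbit_le_swap a (σ a) σ
      have count : RTN.ncyc σ' = RTN.ncyc σ + 1 := by
        have c1 := nb_le_nb_sup_pair_add_one (RTN.orbitSetoid σ') a (σ a)
        have c2 := nb_sup_pair_add_one_le hne
        rw [e1] at c1 c2
        unfold RTN.ncyc
        linarith
      have hstep := ih σ' g' (by omega)
      have htri := pdist_triangle (RTN.orbitSetoid (σ * g')) (RTN.orbitSetoid (σ' * g'))
        (RTN.orbitSetoid g')
      have hsw : RTN.pdist (RTN.orbitSetoid (σ * g')) (RTN.orbitSetoid (σ' * g')) ≤ 1 := by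
        have h2 := pdist_swap (σ * g') a (σ a)
        rw [← mul_assoc] at h2
        rw [RTN.pdist_comm]
        exact h2
      rw [count] at hstep
      linarith

end RTNAux

/-- For permutations `g, g', g₀ ∈ S_N`:
`#(g) - #(P(g)∨P(g')) ≥ #(q_{g₀}(g)) - #(q_{g₀}(g) ∨ q_{g₀}(g'))`, and consequently
`d(g,g') ≥ d(P(g),P(g')) ≥ d(q_{g₀}(g), q_{g₀}(g'))`. -/
theorem cayley_dominates_partition_distance {N : ℕ} (g g' g₀ : Equiv.Perm (Fin N)) :
    (RTN.ncyc g - RTN.nb (RTN.orbitSetoid g ⊔ RTN.orbitSetoid g') ≥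
      RTN.nb (RTN.qc g₀ g) - RTN.nb (RTN.qc g₀ g ⊔ RTN.qc g₀ g')) ∧
    RTN.cayley g g' ≥ RTN.pdist (RTN.orbitSetoid g) (RTN.orbitSetoid g') ∧
    RTN.pdist (RTN.orbitSetoid g) (RTN.orbitSetoid g') ≥
      RTN.pdist (RTN.qc g₀ g) (RTN.qc g₀ g') := by
  classical
  set p := RTN.orbitSetoid g with hp
  set p' := RTN.orbitSetoid g' with hp'
  set p₀ := RTN.orbitSetoid g₀ with hp₀
  have hq1 : RTN.nb (RTN.qc g₀ g) = RTN.nb (p ⊔ p₀) := RTNAux.nb_coarse g₀ p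
  have hq1' : RTN.nb (RTN.qc g₀ g') = RTN.nb (p' ⊔ p₀) := RTNAux.nb_coarse g₀ p'
  have hq2 : RTN.nb (RTN.qc g₀ g ⊔ RTN.qc g₀ g') = RTN.nb ((p ⊔ p') ⊔ p₀) := by
    rw [show RTN.qc g₀ g ⊔ RTN.qc g₀ g' = RTN.coarse g₀ (p ⊔ p') from
      RTNAux.coarse_sup g₀ p p']
    exact RTNAux.nb_coarse g₀ (p ⊔ p')
  have hkey1 := RTNAux.key p (p ⊔ p₀) p' (le_sup_left : p ≤ p ⊔ p₀)
  have hrearr : (p ⊔ p₀) ⊔ p' = (p ⊔ p') ⊔ p₀ := sup_right_comm p p₀ p'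
  rw [hrearr] at hkey1
  refine ⟨?_, ?_, ?_⟩
  · -- statement (1)
    have : RTN.ncyc g = RTN.nb p := rfl
    rw [this, hq1, hq2]
    linarith
  · -- Cayley dominates partition distance
    set σ := g * g'⁻¹ with hσ
    have hσg : σ * g' = g := inv_mul_cancel_right g g'
    have hK := RTNAux.Kmain ((Fintype.card (Fin N) : ℤ) - RTN.ncyc σ).toNat σ g'
      (Int.self_le_toNat _)
    rw [hσg] at hK
    unfold RTN.cayley
    exact hK
  · -- partition distance dominates coarse-grained distance
    have hk2 := RTNAux.key p' (p ⊔ p') p₀ (le_sup_right : p' ≤ p ⊔ p')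
    have hk3 := RTNAux.key p (p ⊔ p') p₀ (le_sup_left : p ≤ p ⊔ p')
    unfold RTN.pdist
    rw [hq1, hq1', hq2]
    linarith
end
end

section
/- For all set partitions q₁,q₂∈P_N, the singlet distance of their singlet patterns equals the Hamming distance of their associated bit strings: d₁(s(q₁),s(q₂))=Σ_{k=1}^{N}|b^k(q₁)−b^k(q₂)|. Consequently d(q₁,q₂)≥⌈(Σ_{k=1}^{N}|b^k(q₁)−b^k(q₂)|)/2⌉. -/
open scoped Classical

noncomputable section

section AuxSingletHamming

open RTN Relation

variable {α : Type*}

lemma aux_isSinglet_mono {s₁ s₂ : Setoid α} (h : s₁ ≤ s₂) {k : α}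
    (hk : IsSinglet s₂ k) : IsSinglet s₁ k :=
  fun y hy => hk y (Setoid.le_def.mp h hy)

lemma aux_isSinglet_sup {s₁ s₂ : Setoid α} {k : α} :
    IsSinglet (s₁ ⊔ s₂) k ↔ IsSinglet s₁ k ∧ IsSinglet s₂ k := by
  constructor
  · intro h
    exact ⟨aux_isSinglet_mono le_sup_left h, aux_isSinglet_mono le_sup_right h⟩
  · rintro ⟨h₁, h₂⟩ y hy
    rw [Setoid.sup_eq_eqvGen] at hy
    have key : ∀ x z : α, EqvGen (fun a b => s₁ a b ∨ s₂ a b) x z →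
        ((x = k → z = k) ∧ (z = k → x = k)) := by
      intro x z h
      induction h with
      | rel a b hab =>
        constructor
        · rintro rfl
          rcases hab with h | h
          · exact h₁ _ h
          · exact h₂ _ h
        · rintro rfl
          rcases hab with h | h
          · exact h₁ _ (s₁.symm h)
          · exact h₂ _ (s₂.symm h)
      | refl a => exact ⟨id, id⟩
      | symm a b _ ih => exact ⟨ih.2, ih.1⟩
      | trans a b c _ _ ih1 ih2 => exact ⟨fun h => ih2.1 (ih1.1 h), fun h => ih1.2 (ih2.2 h)⟩
    exact (key k y hy).1 rfl

lemma aux_isSinglet_spat {p : Setoid α} {k : α} :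
    IsSinglet (spat p) k ↔ IsSinglet p k := by
  constructor
  · intro h y hy
    by_cases hyk : y = k
    · exact hyk
    · have hk : ¬ IsSinglet p k := fun hs => hyk (hs y hy)
      have hy' : ¬ IsSinglet p y := fun hs => hyk (hs k (p.symm hy)).symm
      exact h y (Or.inr ⟨hk, hy'⟩)
  · intro h y hy
    rcases hy with h' | ⟨hk, _⟩
    · exact h'.symm
    · exact absurd h hk

lemma aux_nS_eq [Fintype α] (p : Setoid α) :
    nS p = ((Finset.univ.filter (fun k => IsSinglet p k)).card : ℤ) := by
  unfold nS
  rw [Nat.card_eq_fintype_card, Fintype.card_subtype]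

/-- The key counting inequality (all in `ℕ`): the number of positions that are
a singlet of exactly one of the two partitions, plus `4 #(q₁ ⊔ q₂)`, is at most
`2 #(q₁) + 2 #(q₂)`. -/
lemma aux_key_ineq {α : Type*} [Fintype α] (q₁ q₂ : Setoid α) :
    (Finset.univ.filter (fun k =>
        (IsSinglet q₁ k ∧ ¬ IsSinglet q₂ k) ∨ (IsSinglet q₂ k ∧ ¬ IsSinglet q₁ k))).card
      + 4 * Nat.card (Quotient (q₁ ⊔ q₂))
      ≤ 2 * Nat.card (Quotient q₁) + 2 * Nat.card (Quotient q₂) := by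
  classical
  have hF : Finite α := inferInstance
  set J := Quotient (q₁ ⊔ q₂) with hJ
  let π : α → J := fun x => Quotient.mk (q₁ ⊔ q₂) x
  have hle₁ : ∀ a b : α, q₁ a b → π a = π b := fun a b h =>
    Quot.sound (Setoid.le_def.mp le_sup_left h)
  have hle₂ : ∀ a b : α, q₂ a b → π a = π b := fun a b h =>
    Quot.sound (Setoid.le_def.mp le_sup_right h)
  let g₁ : Quotient q₁ → J := Quotient.lift π hle₁
  let g₂ : Quotient q₂ → J := Quotient.lift π hle₂
  set D := Finset.univ.filter (fun k =>
      (IsSinglet q₁ k ∧ ¬ IsSinglet q₂ k) ∨ (IsSinglet q₂ k ∧ ¬ IsSinglet q₁ k)) with hD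
  -- fiberwise decompositions
  have hc1 : Nat.card (Quotient q₁)
      = ∑ B : J, (Finset.univ.filter (fun c => g₁ c = B)).card := by
    rw [Nat.card_eq_fintype_card, ← Finset.card_univ,
      Finset.card_eq_sum_card_fiberwise (f := g₁) (fun x _ => Finset.mem_univ (g₁ x))]
  have hc2 : Nat.card (Quotient q₂)
      = ∑ B : J, (Finset.univ.filter (fun c => g₂ c = B)).card := by
    rw [Nat.card_eq_fintype_card, ← Finset.card_univ,
      Finset.card_eq_sum_card_fiberwise (f := g₂) (fun x _ => Finset.mem_univ (g₂ x))]
  have hcD : D.card = ∑ B : J, (D.filter (fun k => π k = B)).card :=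
    Finset.card_eq_sum_card_fiberwise (f := π) (fun x _ => Finset.mem_univ (π x))
  have hcJ : Nat.card J = ∑ _B : J, 1 := by
    rw [Nat.card_eq_fintype_card, Finset.sum_const, smul_eq_mul, mul_one, Finset.card_univ]
  -- per-block inequality
  have hblock : ∀ B : J,
      (D.filter (fun k => π k = B)).card + 4
        ≤ 2 * (Finset.univ.filter (fun c => g₁ c = B)).card
          + 2 * (Finset.univ.filter (fun c => g₂ c = B)).card := by
    intro B
    set a := (Finset.univ.filter (fun c => g₁ c = B)).card with ha
    set b := (Finset.univ.filter (fun c => g₂ c = B)).card with hb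
    set F₁ := Finset.univ.filter
      (fun k => IsSinglet q₁ k ∧ ¬ IsSinglet q₂ k ∧ π k = B) with hF₁
    set F₂ := Finset.univ.filter
      (fun k => IsSinglet q₂ k ∧ ¬ IsSinglet q₁ k ∧ π k = B) with hF₂
    -- representative of B
    obtain ⟨x₀, hx₀⟩ := Quot.exists_rep B
    have ha1 : 1 ≤ a := by
      refine Finset.card_pos.mpr ⟨Quotient.mk q₁ x₀, ?_⟩
      simp only [Finset.mem_filter, Finset.mem_univ, true_and]
      exact hx₀
    have hb1 : 1 ≤ b := by
      refine Finset.card_pos.mpr ⟨Quotient.mk q₂ x₀, ?_⟩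
      simp only [Finset.mem_filter, Finset.mem_univ, true_and]
      exact hx₀
    have hsub : (D.filter (fun k => π k = B)) ⊆ F₁ ∪ F₂ := by
      intro k hk
      simp only [hD, Finset.mem_filter, Finset.mem_univ, true_and] at hk
      simp only [hF₁, hF₂, Finset.mem_union, Finset.mem_filter, Finset.mem_univ, true_and]
      rcases hk with ⟨h | h, hπ⟩
      · exact Or.inl ⟨h.1, h.2, hπ⟩
      · exact Or.inr ⟨h.1, h.2, hπ⟩
    have hD_le : (D.filter (fun k => π k = B)).card ≤ F₁.card + F₂.card :=
      le_trans (Finset.card_le_card hsub) (Finset.card_union_le _ _)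
    have hs1a : F₁.card ≤ a := by
      apply Finset.card_le_card_of_injOn (fun k => Quotient.mk q₁ k)
      · intro k hk
        simp only [Finset.mem_coe, hF₁, Finset.mem_filter, Finset.mem_univ, true_and] at hk
        simp only [Finset.mem_coe, ha, Finset.mem_filter, Finset.mem_univ, true_and]
        exact hk.2.2
      · intro k hk k' hk' hkk
        simp only [Finset.mem_coe, hF₁, Finset.mem_filter, Finset.mem_univ, true_and] at hk hk'
        exact (hk.1 k' (Quotient.exact hkk)).symm
    have hs2b : F₂.card ≤ b := by
      apply Finset.card_le_card_of_injOn (fun k => Quotient.mk q₂ k)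
      · intro k hk
        simp only [Finset.mem_coe, hF₂, Finset.mem_filter, Finset.mem_univ, true_and] at hk
        simp only [Finset.mem_coe, hb, Finset.mem_filter, Finset.mem_univ, true_and]
        exact hk.2.2
      · intro k hk k' hk' hkk
        simp only [Finset.mem_coe, hF₂, Finset.mem_filter, Finset.mem_univ, true_and] at hk hk'
        exact (hk.1 k' (Quotient.exact hkk)).symm
    have hs1 : 0 < F₁.card → 2 ≤ a := by
      intro h
      obtain ⟨k, hk⟩ := Finset.card_pos.mp h
      simp only [hF₁, Finset.mem_filter, Finset.mem_univ, true_and] at hk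
      obtain ⟨hk1, hk2, hkB⟩ := hk
      -- k is not a singlet of q₂: get y ≠ k with q₂.r k y
      have : ∃ y, q₂.r k y ∧ y ≠ k := by
        by_contra hcon
        push_neg at hcon
        exact hk2 (fun y hy => hcon y hy)
      obtain ⟨y, hy, hyk⟩ := this
      refine Finset.one_lt_card.mpr ⟨Quotient.mk q₁ k, ?_, Quotient.mk q₁ y, ?_, ?_⟩
      · simp only [ha, Finset.mem_filter, Finset.mem_univ, true_and]
        exact hkB
      · simp only [ha, Finset.mem_filter, Finset.mem_univ, true_and]
        have : π y = π k := (hle₂ k y hy).symm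
        rw [show g₁ (Quotient.mk q₁ y) = π y from rfl, this, hkB]
      · intro hc
        exact hyk (hk1 y (Quotient.exact hc))
    have hs2 : 0 < F₂.card → 2 ≤ b := by
      intro h
      obtain ⟨k, hk⟩ := Finset.card_pos.mp h
      simp only [hF₂, Finset.mem_filter, Finset.mem_univ, true_and] at hk
      obtain ⟨hk1, hk2, hkB⟩ := hk
      have : ∃ y, q₁.r k y ∧ y ≠ k := by
        by_contra hcon
        push_neg at hcon
        exact hk2 (fun y hy => hcon y hy)
      obtain ⟨y, hy, hyk⟩ := this
      refine Finset.one_lt_card.mpr ⟨Quotient.mk q₂ k, ?_, Quotient.mk q₂ y, ?_, ?_⟩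
      · simp only [hb, Finset.mem_filter, Finset.mem_univ, true_and]
        exact hkB
      · simp only [hb, Finset.mem_filter, Finset.mem_univ, true_and]
        have : π y = π k := (hle₁ k y hy).symm
        rw [show g₂ (Quotient.mk q₂ y) = π y from rfl, this, hkB]
      · intro hc
        exact hyk (hk1 y (Quotient.exact hc))
    omega
  calc D.card + 4 * Nat.card J
      = ∑ B : J, ((D.filter (fun k => π k = B)).card + 4) := by
        rw [Finset.sum_add_distrib, ← hcD, hcJ, Finset.mul_sum]
        simp
    _ ≤ ∑ B : J, (2 * (Finset.univ.filter (fun c => g₁ c = B)).card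
          + 2 * (Finset.univ.filter (fun c => g₂ c = B)).card) :=
        Finset.sum_le_sum (fun B _ => hblock B)
    _ = 2 * Nat.card (Quotient q₁) + 2 * Nat.card (Quotient q₂) := by
        rw [Finset.sum_add_distrib, hc1, hc2, Finset.mul_sum, Finset.mul_sum]

end AuxSingletHamming

/-- The singlet distance of the singlet patterns equals the Hamming
distance of the associated bit strings:
`d₁(s(q₁),s(q₂)) = Σ_k |b^k(q₁) - b^k(q₂)|`, and consequently
`d(q₁,q₂) ≥ ⌈(Σ_k |b^k(q₁) - b^k(q₂)|)/2⌉`. -/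
theorem singlet_dist_eq_hamming {N : ℕ} (q₁ q₂ : Setoid (Fin N)) :
    RTN.sdist (RTN.spat q₁) (RTN.spat q₂) =
      ∑ k : Fin N, |RTN.bbit q₁ k - RTN.bbit q₂ k| ∧
    RTN.pdist q₁ q₂ ≥ ⌈((∑ k : Fin N, |RTN.bbit q₁ k - RTN.bbit q₂ k| : ℤ) : ℚ) / 2⌉ := by
  classical
  have habs : ∀ k : Fin N, |RTN.bbit q₁ k - RTN.bbit q₂ k|
      = (if (RTN.IsSinglet q₁ k ∧ ¬ RTN.IsSinglet q₂ k)
          ∨ (RTN.IsSinglet q₂ k ∧ ¬ RTN.IsSinglet q₁ k) then (1 : ℤ) else 0) := by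
    intro k
    unfold RTN.bbit
    by_cases h1 : RTN.IsSinglet q₁ k <;> by_cases h2 : RTN.IsSinglet q₂ k <;>
      simp [h1, h2]
  have hsum : (∑ k : Fin N, |RTN.bbit q₁ k - RTN.bbit q₂ k|)
      = ((Finset.univ.filter (fun k : Fin N =>
          (RTN.IsSinglet q₁ k ∧ ¬ RTN.IsSinglet q₂ k)
            ∨ (RTN.IsSinglet q₂ k ∧ ¬ RTN.IsSinglet q₁ k))).card : ℤ) := by
    rw [← Finset.sum_boole]
    exact Finset.sum_congr rfl (fun k _ => habs k)
  constructor
  · -- the singlet-distance identity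
    unfold RTN.sdist
    rw [aux_nS_eq, aux_nS_eq, aux_nS_eq]
    have hf1 : (Finset.univ.filter (fun k : Fin N => RTN.IsSinglet (RTN.spat q₁) k))
        = Finset.univ.filter (fun k => RTN.IsSinglet q₁ k) := by
      apply Finset.filter_congr
      intro k _
      simp [aux_isSinglet_spat]
    have hf2 : (Finset.univ.filter (fun k : Fin N => RTN.IsSinglet (RTN.spat q₂) k))
        = Finset.univ.filter (fun k => RTN.IsSinglet q₂ k) := by
      apply Finset.filter_congr
      intro k _
      simp [aux_isSinglet_spat]
    have hf12 : (Finset.univ.filter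
          (fun k : Fin N => RTN.IsSinglet (RTN.spat q₁ ⊔ RTN.spat q₂) k))
        = Finset.univ.filter (fun k => RTN.IsSinglet q₁ k ∧ RTN.IsSinglet q₂ k) := by
      apply Finset.filter_congr
      intro k _
      simp [aux_isSinglet_sup, aux_isSinglet_spat]
    rw [hf1, hf2, hf12]
    rw [show (((Finset.univ.filter (fun k : Fin N => RTN.IsSinglet q₁ k)).card : ℤ))
        = ∑ k : Fin N, (if RTN.IsSinglet q₁ k then (1 : ℤ) else 0) from
        (Finset.sum_boole _ _).symm,
      show (((Finset.univ.filter (fun k : Fin N => RTN.IsSinglet q₂ k)).card : ℤ))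
        = ∑ k : Fin N, (if RTN.IsSinglet q₂ k then (1 : ℤ) else 0) from
        (Finset.sum_boole _ _).symm,
      show (((Finset.univ.filter
            (fun k : Fin N => RTN.IsSinglet q₁ k ∧ RTN.IsSinglet q₂ k)).card : ℤ))
        = ∑ k : Fin N, (if RTN.IsSinglet q₁ k ∧ RTN.IsSinglet q₂ k then (1 : ℤ) else 0) from
        (Finset.sum_boole _ _).symm]
    rw [Finset.mul_sum, ← Finset.sum_add_distrib, ← Finset.sum_sub_distrib]
    refine Finset.sum_congr rfl (fun k _ => ?_)
    rw [habs k]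
    by_cases h1 : RTN.IsSinglet q₁ k <;> by_cases h2 : RTN.IsSinglet q₂ k <;>
      simp [h1, h2]
  · -- the ceiling bound
    have hkey := aux_key_ineq q₁ q₂
    have h2 : (∑ k : Fin N, |RTN.bbit q₁ k - RTN.bbit q₂ k|)
        ≤ 2 * RTN.pdist q₁ q₂ := by
      rw [hsum]
      unfold RTN.pdist RTN.nb
      omega
    rw [ge_iff_le, Int.ceil_le]
    rw [div_le_iff₀ (by norm_num : (0:ℚ) < 2)]
    have : ((∑ k : Fin N, |RTN.bbit q₁ k - RTN.bbit q₂ k| : ℤ) : ℚ)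
        ≤ ((2 * RTN.pdist q₁ q₂ : ℤ) : ℚ) := by exact_mod_cast h2
    push_cast at this ⊢
    linarith
end
end
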